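/- Let t ≥ 3 be an integer, and let Q be a t-mansion. Then every hole in Q is of length five; in particular, Q is (C_4, C_6, C_7)-free. -/
import Mathlib


namespace Paper

open SimpleGraph

variable {V : Type} {W : Type}

/-- `G` contains no induced copy of `H` (there is no graph embedding of `H` into `G`). -/
def IndFree (G : SimpleGraph V) (H : SimpleGraph W) : Prop :=
  IsEmpty (H ↪g G)

/-- `2P₃`: the disjoint union of two paths on three vertices. -/
def twoP3 : SimpleGraph (Fin 3 ⊕ Fin 3) :=
  SimpleGraph.fromRel (fun u v =>
    match u, v with
    | Sum.inl a, Sum.inl b => (pathGraph 3).Adj a b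
    | Sum.inr a, Sum.inr b => (pathGraph 3).Adj a b
    | _, _ => False)

/-- `4K₁`: the edgeless graph on four vertices. -/
def fourK1 : SimpleGraph (Fin 4) := ⊥

/-- The cycle on `n` vertices (for `n ≥ 3`). -/
def cycleG (n : ℕ) : SimpleGraph (ZMod n) :=
  SimpleGraph.fromRel (fun u v => v = u + 1)

/-- The graph `T₀`: vertices `0,…,8` stand for `a₀,a₁,b₀,b₁,b₂,b₃,c₁,c₂,c₃`. -/
def T0 : SimpleGraph (Fin 9) :=
  SimpleGraph.fromRel (fun u v =>
    (u, v) ∈ ([(0,1),(0,2),(0,4),(0,5),(1,3),(1,4),(1,5),(2,6),(3,6),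
               (4,7),(5,8),(6,7),(6,8),(7,8)] : List (Fin 9 × Fin 9)))

/-- The `t`-pentagon: `Sum.inl ()` is the vertex `a`, `Sum.inr (Sum.inl i)` is `bᵢ`,
and `Sum.inr (Sum.inr i)` is `cᵢ`. -/
def pentagon (t : ℕ) : SimpleGraph (Unit ⊕ Fin t ⊕ Fin t) :=
  SimpleGraph.fromRel (fun u v =>
    match u, v with
    | Sum.inl _, Sum.inr (Sum.inl _) => True
    | Sum.inr (Sum.inl i), Sum.inr (Sum.inr j) => i = j
    | Sum.inr (Sum.inr _), Sum.inr (Sum.inr _) => True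
    | _, _ => False)

/-- `X` is complete to `Y` in `G`. -/
def CompleteTo (G : SimpleGraph V) (X Y : Set V) : Prop :=
  ∀ x ∈ X, ∀ y ∈ Y, G.Adj x y

/-- `X` is anticomplete to `Y` in `G`. -/
def AnticompleteTo (G : SimpleGraph V) (X Y : Set V) : Prop :=
  ∀ x ∈ X, ∀ y ∈ Y, ¬ G.Adj x y

/-- A simplicial vertex: its neighborhood is a clique. -/
def IsSimplicial (G : SimpleGraph V) (v : V) : Prop :=
  G.IsClique (G.neighborSet v)

/-- A universal vertex: adjacent to all other vertices. -/
def IsUniversal (G : SimpleGraph V) (v : V) : Prop :=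
  ∀ w, w ≠ v → G.Adj v w




/-- A 5-basket partition `(A; B 0, B 1, B 2; C 0, C 1, C 2; F)` of `Q`. -/
def IsFiveBasketPartition (Q : SimpleGraph W) (A : Set W) (B C : Fin 3 → Set W)
    (F : Set W) : Prop :=
  (∀ i, Disjoint A (B i)) ∧ (∀ i, Disjoint A (C i)) ∧ Disjoint A F ∧
  (∀ i j, i ≠ j → Disjoint (B i) (B j)) ∧
  (∀ i j, i ≠ j → Disjoint (C i) (C j)) ∧
  (∀ i j, Disjoint (B i) (C j)) ∧
  (∀ i, Disjoint (B i) F) ∧ (∀ i, Disjoint (C i) F) ∧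
  (A ∪ (⋃ i, B i) ∪ (⋃ i, C i) ∪ F = Set.univ) ∧
  Q.IsClique A ∧ (∀ i, Q.IsClique (B i)) ∧ (∀ i, Q.IsClique (C i)) ∧ Q.IsClique F ∧
  A.Nonempty ∧ (∀ i, (B i).Nonempty) ∧ (∀ i, (C i).Nonempty) ∧
  (∀ i j, i ≠ j → AnticompleteTo Q (B i) (B j)) ∧
  (∀ i j, i ≠ j → CompleteTo Q (C i) (C j)) ∧
  (∀ i, AnticompleteTo Q A (C i)) ∧
  (∀ i, CompleteTo Q (B i) (C i)) ∧
  (∀ i j, i ≠ j → AnticompleteTo Q (B i) (C j)) ∧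
  (∃ istar : Fin 3,
    (∀ i, i ≠ istar → CompleteTo Q A (B i)) ∧
    (∀ a ∈ A, ∀ a' ∈ A,
      Q.neighborSet a ∩ B istar ⊆ Q.neighborSet a' ∩ B istar ∨
      Q.neighborSet a' ∩ B istar ⊆ Q.neighborSet a ∩ B istar) ∧
    (∃ a ∈ A, B istar ⊆ Q.neighborSet a)) ∧
  (∃ jstar : Fin 3,
    CompleteTo Q F (B jstar ∪ C jstar ∪ F)ᶜ ∧
    AnticompleteTo Q F (B jstar ∪ C jstar))

/-- A 5-basket. -/
def IsFiveBasket (Q : SimpleGraph W) : Prop :=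
  ∃ (A : Set W) (B C : Fin 3 → Set W) (F : Set W), IsFiveBasketPartition Q A B C F

/-- All conditions of a `t`-villa partition except that the parts exhaust the vertex set. -/
def VillaCore {t : ℕ} (Q : SimpleGraph W) (A : Set W) (B C : Fin t → Set W) : Prop :=
  (∀ i, Disjoint A (B i)) ∧ (∀ i, Disjoint A (C i)) ∧
  (∀ i j, i ≠ j → Disjoint (B i) (B j)) ∧
  (∀ i j, i ≠ j → Disjoint (C i) (C j)) ∧
  (∀ i j, Disjoint (B i) (C j)) ∧
  Q.IsClique A ∧ (∀ i, Q.IsClique (B i)) ∧ (∀ i, Q.IsClique (C i)) ∧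
  A.Nonempty ∧ (∀ i, (B i).Nonempty) ∧ (∀ i, (C i).Nonempty) ∧
  (∀ i, CompleteTo Q A (B i)) ∧ (∀ i, AnticompleteTo Q A (C i)) ∧
  (∀ i j, i ≠ j → AnticompleteTo Q (B i) (B j)) ∧
  (∀ i j, i ≠ j → CompleteTo Q (C i) (C j)) ∧
  (∀ i j, i ≠ j → AnticompleteTo Q (B i) (C j)) ∧
  (∀ i, ∀ b ∈ B i, ∀ b' ∈ B i,
     Q.neighborSet b ∩ C i ⊆ Q.neighborSet b' ∩ C i ∨
     Q.neighborSet b' ∩ C i ⊆ Q.neighborSet b ∩ C i) ∧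
  (∀ i, ∀ b ∈ B i, (Q.neighborSet b ∩ C i).Nonempty) ∧
  (∀ i, ∃ b ∈ B i, C i ⊆ Q.neighborSet b)

/-- A `t`-villa partition `(A; B 0,…,B (t-1); C 0,…,C (t-1))` of `Q`. -/
def IsVillaPartition {t : ℕ} (Q : SimpleGraph W) (A : Set W) (B C : Fin t → Set W) : Prop :=
  VillaCore Q A B C ∧ A ∪ (⋃ i, B i) ∪ (⋃ i, C i) = Set.univ

/-- A `t`-villa. -/
def IsTVilla (t : ℕ) (Q : SimpleGraph W) : Prop :=
  ∃ (A : Set W) (B C : Fin t → Set W), IsVillaPartition Q A B C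

/-- A villa: a `t`-villa for some `t ≥ 3`. -/
def IsVilla (Q : SimpleGraph W) : Prop :=
  ∃ t, 3 ≤ t ∧ IsTVilla t Q

/-- A `t`-mansion partition `(A; B; C; F; X; Y)` of `Q`. -/
def IsMansionPartition {t : ℕ} (Q : SimpleGraph W) (A : Set W) (B C : Fin t → Set W)
    (F X Y : Set W) : Prop :=
  VillaCore Q A B C ∧
  Disjoint A F ∧ Disjoint A X ∧ Disjoint A Y ∧
  (∀ i, Disjoint (B i) F) ∧ (∀ i, Disjoint (B i) X) ∧ (∀ i, Disjoint (B i) Y) ∧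
  (∀ i, Disjoint (C i) F) ∧ (∀ i, Disjoint (C i) X) ∧ (∀ i, Disjoint (C i) Y) ∧
  Disjoint F X ∧ Disjoint F Y ∧ Disjoint X Y ∧
  (A ∪ (⋃ i, B i) ∪ (⋃ i, C i) ∪ F ∪ X ∪ Y = Set.univ) ∧
  Q.IsClique F ∧ Q.IsClique X ∧ Q.IsClique Y ∧ F.Nonempty ∧
  (∃ jstar : Fin t,
    CompleteTo Q F A ∧
    (∀ i, i ≠ jstar → CompleteTo Q F (B i)) ∧
    (∀ i, i ≠ jstar → CompleteTo Q F (C i)) ∧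
    AnticompleteTo Q F (B jstar) ∧ AnticompleteTo Q F (C jstar) ∧
    CompleteTo Q (B jstar) (C jstar) ∧
    CompleteTo Q X A ∧ CompleteTo Q X (B jstar) ∧
    (∀ i, i ≠ jstar → AnticompleteTo Q X (B i)) ∧
    (∀ i, AnticompleteTo Q X (C i))) ∧
  CompleteTo Q F X ∧ CompleteTo Q F Y ∧
  AnticompleteTo Q X Y ∧
  (∀ i, CompleteTo Q Y (C i)) ∧
  AnticompleteTo Q Y A ∧ (∀ i, AnticompleteTo Q Y (B i))

/-- A `t`-mansion. -/
def IsTMansion (t : ℕ) (Q : SimpleGraph W) : Prop :=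
  ∃ (A : Set W) (B C : Fin t → Set W) (F X Y : Set W),
    IsMansionPartition Q A B C F X Y

/-- A mansion: a `t`-mansion for some `t ≥ 3`. -/
def IsMansion (Q : SimpleGraph W) : Prop :=
  ∃ t, 3 ≤ t ∧ IsTMansion t Q

/-- A `t`-frame partition of `Q`. -/
def IsFramePartition {t : ℕ} (Q : SimpleGraph W) (A : Set W) (B C : Fin t → Set W) : Prop :=
  (∀ i, Disjoint A (B i)) ∧ (∀ i, Disjoint A (C i)) ∧
  (∀ i j, i ≠ j → Disjoint (B i) (B j)) ∧
  (∀ i j, i ≠ j → Disjoint (C i) (C j)) ∧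
  (∀ i j, Disjoint (B i) (C j)) ∧
  (A ∪ (⋃ i, B i) ∪ (⋃ i, C i) = Set.univ) ∧
  A.Nonempty ∧ (∀ i, (B i).Nonempty) ∧ (∀ i, (C i).Nonempty) ∧
  (∀ a ∈ A, ∃ i j : Fin t, i ≠ j ∧ (∃ b ∈ B i, Q.Adj a b) ∧ (∃ b ∈ B j, Q.Adj a b)) ∧
  (∀ i, AnticompleteTo Q A (C i)) ∧
  (∀ i j, i ≠ j → AnticompleteTo Q (B i) (B j)) ∧
  (∀ i j, i ≠ j → CompleteTo Q (C i) (C j)) ∧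
  (∀ i j, i ≠ j → AnticompleteTo Q (B i) (C j)) ∧
  (∀ i, ∀ b ∈ B i, ∃ a ∈ A, Q.Adj b a) ∧
  (∀ i, ∀ b ∈ B i, ∃ c ∈ C i, Q.Adj b c) ∧
  (∀ i, ∀ c ∈ C i, ∃ b ∈ B i, Q.Adj c b)

/-- A `k`-ring partition of `Q` (indices modulo `k`). -/
def IsRingPartition {k : ℕ} (Q : SimpleGraph W) (X : ZMod k → Set W) : Prop :=
  (∀ i j, i ≠ j → Disjoint (X i) (X j)) ∧
  (⋃ i, X i) = Set.univ ∧
  (∀ i, (X i).Nonempty) ∧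
  (∀ i, ∀ u ∈ X i, X i ⊆ insert u (Q.neighborSet u)) ∧
  (∀ i, ∀ u ∈ X i, ∀ u' ∈ X i,
     insert u (Q.neighborSet u) ⊆ insert u' (Q.neighborSet u') ∨
     insert u' (Q.neighborSet u') ⊆ insert u (Q.neighborSet u)) ∧
  (∀ i, ∀ u ∈ X i, insert u (Q.neighborSet u) ⊆ X (i-1) ∪ X i ∪ X (i+1)) ∧
  (∀ i, ∃ u ∈ X i, X (i-1) ∪ X i ∪ X (i+1) ⊆ insert u (Q.neighborSet u))

/-- A `k`-ring. -/
def IsRing (k : ℕ) (Q : SimpleGraph W) : Prop :=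
  ∃ X : ZMod k → Set W, IsRingPartition Q X

/-- A 5-crown. -/
def IsFiveCrown (Q : SimpleGraph W) : Prop :=
  ∃ X : ZMod 5 → Set W, IsRingPartition Q X ∧
    ∃ istar : ZMod 5, CompleteTo Q (X (istar - 1)) (X (istar - 2)) ∧
      CompleteTo Q (X (istar + 1)) (X (istar + 2))


private lemma zmod_add_ne {n : ℕ} (a b : ℕ) (h1 : a < b) (h2 : b < a + n) (k : ZMod n) :
    k + (a : ZMod n) ≠ k + (b : ZMod n) := by
  intro h
  have h3 : ((a : ℕ) : ZMod n) = ((b : ℕ) : ZMod n) := add_left_cancel h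
  rw [ZMod.natCast_eq_natCast_iff] at h3
  have h4 := (Nat.modEq_iff_dvd' h1.le).mp h3
  have h5 := Nat.le_of_dvd (by omega) h4
  omega

private lemma cyc_adj_succ {n : ℕ} (hn : 2 ≤ n) (x : ZMod n) : (cycleG n).Adj x (x + 1) := by
  have hne : x ≠ x + 1 := by
    have := zmod_add_ne (n := n) 0 1 one_pos (by omega) x
    simpa using this
  exact (SimpleGraph.fromRel_adj _ _ _).mpr ⟨hne, Or.inl rfl⟩

private lemma cyc_nonadj {n : ℕ} (a b : ℕ) (h1 : a + 2 ≤ b) (h2 : b + 2 ≤ a + n) (k : ZMod n) :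
    ¬ (cycleG n).Adj (k + (a : ZMod n)) (k + (b : ZMod n)) := by
  simp only [cycleG, fromRel_adj]
  rintro ⟨hne, h | h⟩
  · rw [add_assoc] at h
    have h3 : ((b : ℕ) : ZMod n) = ((a + 1 : ℕ) : ZMod n) := by
      rw [add_left_cancel h]; push_cast; ring
    rw [ZMod.natCast_eq_natCast_iff] at h3
    have h4 := (Nat.modEq_iff_dvd' (by omega)).mp h3.symm
    have h5 := Nat.le_of_dvd (by omega) h4
    omega
  · rw [add_assoc] at h
    have h3 : ((a : ℕ) : ZMod n) = ((b + 1 : ℕ) : ZMod n) := by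
      rw [add_left_cancel h]; push_cast; ring
    rw [ZMod.natCast_eq_natCast_iff] at h3
    have h4 := (Nat.modEq_iff_dvd' (by omega)).mp h3
    have h5 := Nat.le_of_dvd (by omega) h4
    omega

private def mirrorIso (n : ℕ) : cycleG n ≃g cycleG n where
  toFun x := -x
  invFun x := -x
  left_inv x := neg_neg x
  right_inv x := neg_neg x
  map_rel_iff' := by
    intro a b
    show (cycleG n).Adj (-a) (-b) ↔ (cycleG n).Adj a b
    simp only [cycleG, fromRel_adj]
    constructor
    · rintro ⟨hne, h | h⟩
      · exact ⟨fun hh => hne (by rw [hh]), Or.inr (by linear_combination h)⟩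
      · exact ⟨fun hh => hne (by rw [hh]), Or.inl (by linear_combination h)⟩
    · rintro ⟨hne, h | h⟩
      · exact ⟨fun hh => hne (neg_injective hh), Or.inr (by linear_combination h)⟩
      · exact ⟨fun hh => hne (neg_injective hh), Or.inl (by linear_combination h)⟩

private lemma walkcore {W : Type} {t n : ℕ} {Q : SimpleGraph W} {A : Set W}
    {B C : Fin t → Set W} {F X Y : Set W}
    (hM : IsMansionPartition Q A B C F X Y) (hn : 4 ≤ n) (hn5 : n ≠ 5)
    (g : cycleG n ↪g Q) (k : ZMod n) (i : Fin t)
    (hb0 : g k ∈ B i)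
    (ht1 : g (k + 1) ∈ A ∨ g (k + 1) ∈ F ∨ g (k + 1) ∈ X) : False := by
  obtain ⟨⟨dAB, dAC, dBB, dCC, dBC, cliqA, cliqB, cliqC, hAne, hBne, hCne, hAB, hAC,
    hBB, hCC, hBC, hchain, hnb, hnbf⟩, dAF, dAX, dAY, dBF, dBX, dBY, dCF, dCX, dCY,
    dFX, dFY, dXY, hUniv, cliqF, cliqX, cliqY, hFne,
    ⟨js, hFA, hFB, hFC, hFBj, hFCj, hBjCj, hXA, hXBj, hXB, hXC⟩,
    hFX, hFY, hXY, hYC, hYA, hYB⟩ := hM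
  have mem6 : ∀ v : W, v ∈ A ∨ (∃ p, v ∈ B p) ∨ (∃ p, v ∈ C p) ∨ v ∈ F ∨ v ∈ X ∨ v ∈ Y := by
    intro v
    have hv : v ∈ A ∪ (⋃ i, B i) ∪ (⋃ i, C i) ∪ F ∪ X ∪ Y := by
      rw [hUniv]; exact Set.mem_univ v
    simp only [Set.mem_union, Set.mem_iUnion] at hv
    rcases hv with ((((h | ⟨p, h⟩) | ⟨p, h⟩) | h) | h) | h
    · exact Or.inl h
    · exact Or.inr (Or.inl ⟨p, h⟩)
    · exact Or.inr (Or.inr (Or.inl ⟨p, h⟩))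
    · exact Or.inr (Or.inr (Or.inr (Or.inl h)))
    · exact Or.inr (Or.inr (Or.inr (Or.inr (Or.inl h))))
    · exact Or.inr (Or.inr (Or.inr (Or.inr (Or.inr h))))
  set w : ℕ → W := fun a => g (k + (a : ZMod n)) with hwdef
  have wadj : ∀ a : ℕ, Q.Adj (w a) (w (a + 1)) := by
    intro a
    simp only [hwdef]
    have hc : ((a + 1 : ℕ) : ZMod n) = (a : ZMod n) + 1 := by push_cast; ring
    rw [hc, ← add_assoc]
    exact g.map_adj_iff.mpr (cyc_adj_succ (by omega) _)
  have wnadj : ∀ a b : ℕ, a + 2 ≤ b → b + 2 ≤ a + n → ¬ Q.Adj (w a) (w b) :=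
    fun a b h1 h2 h => cyc_nonadj a b h1 h2 k (g.map_adj_iff.mp h)
  have wne : ∀ a b : ℕ, a < b → b < a + n → w a ≠ w b :=
    fun a b h1 h2 h => zmod_add_ne a b h1 h2 k (g.injective h)
  have h0 : w 0 ∈ B i := by
    simp only [hwdef, Nat.cast_zero, add_zero]; exact hb0
  have h1 : w 1 ∈ A ∨ w 1 ∈ F ∨ w 1 ∈ X := by
    simp only [hwdef, Nat.cast_one]; exact ht1
  have BBs : ∀ {u v : W} {p q : Fin t}, u ∈ B p → v ∈ B q → Q.Adj u v → p = q := by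
    intro u v p q hu hv h
    by_contra hne
    exact hBB p q hne u hu v hv h
  have BCs : ∀ {u v : W} {p q : Fin t}, u ∈ B p → v ∈ C q → Q.Adj u v → p = q := by
    intro u v p q hu hv h
    by_contra hne
    exact hBC p q hne u hu v hv h
  have E0 : Q.Adj (w 0) (w 1) := wadj 0
  have E1 : Q.Adj (w 1) (w 2) := wadj 1
  have E2 : Q.Adj (w 2) (w 3) := wadj 2
  have E3 : Q.Adj (w 3) (w 4) := wadj 3
  have E4 : Q.Adj (w 4) (w 5) := wadj 4
  rcases (show n = 4 ∨ 6 ≤ n by omega) with hn4 | hn6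
  · -- case n = 4
    subst hn4
    have N02 : ¬ Q.Adj (w 0) (w 2) := wnadj 0 2 (by omega) (by omega)
    have N13 : ¬ Q.Adj (w 1) (w 3) := wnadj 1 3 (by omega) (by omega)
    have NE02 : w 0 ≠ w 2 := wne 0 2 (by omega) (by omega)
    have NE13 : w 1 ≠ w 3 := wne 1 3 (by omega) (by omega)
    have w30 : Q.Adj (w 3) (w 0) := by
      simp only [hwdef]
      apply g.map_adj_iff.mpr
      refine (SimpleGraph.fromRel_adj _ _ _).mpr ⟨?_, Or.inl ?_⟩
      · intro hh
        exact zmod_add_ne 0 3 (by omega) (by omega) k hh.symm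
      · rw [add_assoc]
        exact congrArg (fun z => k + z) (by decide)
    rcases mem6 (w 2) with h2 | ⟨j, h2⟩ | ⟨m, h2⟩ | h2 | h2 | h2
    · exact N02 ((hAB i _ h2 _ h0).symm)
    · -- w2 ∈ B j
      have hij : i ≠ j := fun hh => N02 (cliqB i h0 (by rw [hh]; exact h2) NE02)
      rcases mem6 (w 3) with h3 | ⟨p, h3⟩ | ⟨p, h3⟩ | h3 | h3 | h3
      · rcases h1 with h1 | h1 | h1
        · exact N13 (cliqA h1 h3 NE13)
        · exact N13 (hFA _ h1 _ h3)
        · exact N13 (hXA _ h1 _ h3)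
      · exact hij ((BBs h3 h0 w30).symm.trans (BBs h2 h3 E2).symm)
      · exact hij ((BCs h0 h3 w30.symm).trans (BCs h2 h3 E2).symm)
      · rcases h1 with h1 | h1 | h1
        · exact N13 (hFA _ h3 _ h1).symm
        · exact N13 (cliqF h1 h3 NE13)
        · exact N13 (hFX _ h3 _ h1).symm
      · -- X
        have hi' : i = js := by
          by_contra hni
          exact hXB i hni _ h3 _ h0 w30
        have hj' : j = js := by
          by_contra hnj
          exact hXB j hnj _ h3 _ h2 E2.symm
        exact hij (hi'.trans hj'.symm)
      · exact hYB j _ h3 _ h2 E2.symm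
    · -- w2 ∈ C m
      rcases h1 with h1 | h1 | h1
      · exact hAC m _ h1 _ h2 E1
      · have hi' : i ≠ js := fun hh => hFBj _ h1 _ (by rw [← hh]; exact h0) E0.symm
        rcases mem6 (w 3) with h3 | ⟨p, h3⟩ | ⟨p, h3⟩ | h3 | h3 | h3
        · exact N13 (hFA _ h1 _ h3)
        · have hp : p = i := BBs h3 h0 w30
          exact N13 (hFB p (by rw [hp]; exact hi') _ h1 _ h3)
        · have hp : p = i := (BCs h0 h3 w30.symm).symm
          exact N13 (hFC p (by rw [hp]; exact hi') _ h1 _ h3)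
        · exact N13 (cliqF h1 h3 NE13)
        · exact N13 (hFX _ h1 _ h3)
        · exact N13 (hFY _ h1 _ h3)
      · exact hXC m _ h1 _ h2 E1
    · -- w2 ∈ F
      have hi' : i = js := by
        by_contra hni
        exact N02 ((hFB i hni _ h2 _ h0).symm)
      rcases h1 with h1 | h1 | h1
      · -- w1 ∈ A
        rcases mem6 (w 3) with h3 | ⟨p, h3⟩ | ⟨p, h3⟩ | h3 | h3 | h3
        · exact N13 (cliqA h1 h3 NE13)
        · have hp : p = i := BBs h3 h0 w30
          exact hFBj _ h2 _ (by rw [← hi', ← hp]; exact h3) E2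
        · have hp : p = i := (BCs h0 h3 w30.symm).symm
          exact hFCj _ h2 _ (by rw [← hi', ← hp]; exact h3) E2
        · exact N13 (hFA _ h3 _ h1).symm
        · exact N13 (hXA _ h3 _ h1).symm
        · exact hYB i _ h3 _ h0 w30
      · exact hFBj _ h1 _ (by rw [← hi']; exact h0) E0.symm
      · -- w1 ∈ X
        rcases mem6 (w 3) with h3 | ⟨p, h3⟩ | ⟨p, h3⟩ | h3 | h3 | h3
        · exact N13 (hXA _ h1 _ h3)
        · have hp : p = i := BBs h3 h0 w30
          exact hFBj _ h2 _ (by rw [← hi', ← hp]; exact h3) E2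
        · have hp : p = i := (BCs h0 h3 w30.symm).symm
          exact hFCj _ h2 _ (by rw [← hi', ← hp]; exact h3) E2
        · exact N13 (hFX _ h3 _ h1).symm
        · exact N13 (cliqX h1 h3 NE13)
        · exact hYB i _ h3 _ h0 w30
    · -- w2 ∈ X
      have hi' : i ≠ js := fun hh => N02 ((hXBj _ h2 _ (by rw [← hh]; exact h0)).symm)
      rcases h1 with h1 | h1 | h1
      · -- w1 ∈ A
        rcases mem6 (w 3) with h3 | ⟨p, h3⟩ | ⟨p, h3⟩ | h3 | h3 | h3
        · exact N13 (cliqA h1 h3 NE13)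
        · exact N13 (hAB p _ h1 _ h3)
        · exact hXC p _ h2 _ h3 E2
        · exact N13 (hFA _ h3 _ h1).symm
        · exact N13 (hXA _ h3 _ h1).symm
        · exact hXY _ h2 _ h3 E2
      · -- w1 ∈ F
        rcases mem6 (w 3) with h3 | ⟨p, h3⟩ | ⟨p, h3⟩ | h3 | h3 | h3
        · exact N13 (hFA _ h1 _ h3)
        · have hp : p = js := by
            by_contra hnp
            exact hXB p hnp _ h2 _ h3 E2
          have hp2 : p = i := BBs h3 h0 w30
          exact hi' (hp2.symm.trans hp)
        · exact hXC p _ h2 _ h3 E2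
        · exact N13 (cliqF h1 h3 NE13)
        · exact N13 (hFX _ h1 _ h3)
        · exact N13 (hFY _ h1 _ h3)
      · exact hXB i hi' _ h1 _ h0 E0.symm
    · -- w2 ∈ Y
      rcases h1 with h1 | h1 | h1
      · exact hYA _ h2 _ h1 E1.symm
      · -- w1 ∈ F
        have hi' : i ≠ js := fun hh => hFBj _ h1 _ (by rw [← hh]; exact h0) E0.symm
        rcases mem6 (w 3) with h3 | ⟨p, h3⟩ | ⟨p, h3⟩ | h3 | h3 | h3
        · exact N13 (hFA _ h1 _ h3)
        · exact hYB p _ h2 _ h3 E2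
        · have hp : p = js := by
            by_contra hnp
            exact N13 (hFC p hnp _ h1 _ h3)
          have hp2 : p = i := (BCs h0 h3 w30.symm).symm
          exact hi' (hp2.symm.trans hp)
        · exact N13 (cliqF h1 h3 NE13)
        · exact N13 (hFX _ h1 _ h3)
        · exact N13 (hFY _ h1 _ h3)
      · exact hXY _ h1 _ h2 E1
  · -- case 6 ≤ n
    have N02 : ¬ Q.Adj (w 0) (w 2) := wnadj 0 2 (by omega) (by omega)
    have N04 : ¬ Q.Adj (w 0) (w 4) := wnadj 0 4 (by omega) (by omega)
    have N13 : ¬ Q.Adj (w 1) (w 3) := wnadj 1 3 (by omega) (by omega)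
    have N14 : ¬ Q.Adj (w 1) (w 4) := wnadj 1 4 (by omega) (by omega)
    have N15 : ¬ Q.Adj (w 1) (w 5) := wnadj 1 5 (by omega) (by omega)
    have N24 : ¬ Q.Adj (w 2) (w 4) := wnadj 2 4 (by omega) (by omega)
    have N35 : ¬ Q.Adj (w 3) (w 5) := wnadj 3 5 (by omega) (by omega)
    have NE02 : w 0 ≠ w 2 := wne 0 2 (by omega) (by omega)
    have NE13 : w 1 ≠ w 3 := wne 1 3 (by omega) (by omega)
    have NE14 : w 1 ≠ w 4 := wne 1 4 (by omega) (by omega)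
    have NE15 : w 1 ≠ w 5 := wne 1 5 (by omega) (by omega)
    have NE24 : w 2 ≠ w 4 := wne 2 4 (by omega) (by omega)
    have NE35 : w 3 ≠ w 5 := wne 3 5 (by omega) (by omega)
    rcases mem6 (w 2) with h2 | ⟨j, h2⟩ | ⟨m, h2⟩ | h2 | h2 | h2
    · exact N02 ((hAB i _ h2 _ h0).symm)
    · -- w2 ∈ B j
      have hij : i ≠ j := fun hh => N02 (cliqB i h0 (by rw [hh]; exact h2) NE02)
      rcases h1 with h1 | h1 | h1
      · -- w1 ∈ A
        rcases mem6 (w 3) with h3 | ⟨p, h3⟩ | ⟨p, h3⟩ | h3 | h3 | h3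
        · exact N13 (cliqA h1 h3 NE13)
        · exact N13 (hAB p _ h1 _ h3)
        · -- w3 ∈ C p with p = j
          have cont5 : (w 4 ∈ Y ∨ ∃ q, w 4 ∈ C q) → False := by
            intro h4d
            rcases mem6 (w 5) with h5 | ⟨r, h5⟩ | ⟨r, h5⟩ | h5 | h5 | h5
            · exact N15 (cliqA h1 h5 NE15)
            · exact N15 (hAB r _ h1 _ h5)
            · by_cases hrp : r = p
              · exact N35 (cliqC p h3 (by rw [← hrp]; exact h5) NE35)
              · exact N35 (hCC p r (fun hh => hrp hh.symm) _ h3 _ h5)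
            · exact N15 (hFA _ h5 _ h1).symm
            · rcases h4d with h4 | ⟨q, h4⟩
              · exact hXY _ h5 _ h4 E4.symm
              · exact hXC q _ h5 _ h4 E4.symm
            · exact N35 (hYC p _ h5 _ h3).symm
          rcases mem6 (w 4) with h4 | ⟨q, h4⟩ | ⟨q, h4⟩ | h4 | h4 | h4
          · exact N14 (cliqA h1 h4 NE14)
          · exact N14 (hAB q _ h1 _ h4)
          · exact cont5 (Or.inr ⟨q, h4⟩)
          · exact N14 (hFA _ h4 _ h1).symm
          · exact hXC p _ h4 _ h3 E3.symm
          · exact cont5 (Or.inl h4)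
        · exact N13 (hFA _ h3 _ h1).symm
        · exact N13 (hXA _ h3 _ h1).symm
        · exact hYB j _ h3 _ h2 E2.symm
      · -- w1 ∈ F
        have hj' : j ≠ js := fun hh => hFBj _ h1 _ (by rw [← hh]; exact h2) E1
        rcases mem6 (w 3) with h3 | ⟨p, h3⟩ | ⟨p, h3⟩ | h3 | h3 | h3
        · exact N13 (hFA _ h1 _ h3)
        · have hpj : j = p := BBs h2 h3 E2
          exact N13 (hFB p (fun hh => hj' (hpj.trans hh)) _ h1 _ h3)
        · have hpj : j = p := BCs h2 h3 E2
          exact N13 (hFC p (fun hh => hj' (hpj.trans hh)) _ h1 _ h3)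
        · exact N13 (cliqF h1 h3 NE13)
        · exact N13 (hFX _ h1 _ h3)
        · exact hYB j _ h3 _ h2 E2.symm
      · -- w1 ∈ X
        have hi' : i = js := by
          by_contra hni
          exact hXB i hni _ h1 _ h0 E0.symm
        have hj'' : j = js := by
          by_contra hnj
          exact hXB j hnj _ h1 _ h2 E1
        exact hij (hi'.trans hj''.symm)
    · -- w2 ∈ C m
      rcases h1 with h1 | h1 | h1
      · exact hAC m _ h1 _ h2 E1
      · -- w1 ∈ F
        have hm' : m ≠ js := fun hh => hFCj _ h1 _ (by rw [← hh]; exact h2) E1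
        have cont45 : w 3 ∈ C js → False := by
          intro h3
          rcases mem6 (w 4) with h4 | ⟨q, h4⟩ | ⟨q, h4⟩ | h4 | h4 | h4
          · exact hAC js _ h4 _ h3 E3.symm
          · -- w4 ∈ B q with q = js
            have hq : q = js := BCs h4 h3 E3.symm
            have h4' : w 4 ∈ B js := by rw [← hq]; exact h4
            rcases mem6 (w 5) with h5 | ⟨r, h5⟩ | ⟨r, h5⟩ | h5 | h5 | h5
            · exact N15 (hFA _ h1 _ h5)
            · have hr : js = r := BBs h4' h5 E4
              exact N35 (hBjCj _ (by rw [← hr] at h5; exact h5) _ h3).symm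
            · have hr : js = r := BCs h4' h5 E4
              exact N35 (cliqC js h3 (by rw [← hr] at h5; exact h5) NE35)
            · exact N15 (cliqF h1 h5 NE15)
            · exact N15 (hFX _ h1 _ h5)
            · exact hYB js _ h5 _ h4' E4.symm
          · by_cases hqm : q = m
            · exact N24 (cliqC m h2 (by rw [← hqm]; exact h4) NE24)
            · exact N24 (hCC m q (fun hh => hqm hh.symm) _ h2 _ h4)
          · exact N14 (cliqF h1 h4 NE14)
          · exact hXC js _ h4 _ h3 E3.symm
          · exact N24 (hYC m _ h4 _ h2).symm
        rcases mem6 (w 3) with h3 | ⟨p, h3⟩ | ⟨p, h3⟩ | h3 | h3 | h3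
        · exact N13 (hFA _ h1 _ h3)
        · have hp : p = m := BCs h3 h2 E2.symm
          exact N13 (hFB p (by rw [hp]; exact hm') _ h1 _ h3)
        · by_cases hpj : p = js
          · exact cont45 (by rw [← hpj]; exact h3)
          · exact N13 (hFC p hpj _ h1 _ h3)
        · exact N13 (cliqF h1 h3 NE13)
        · exact N13 (hFX _ h1 _ h3)
        · exact N13 (hFY _ h1 _ h3)
      · exact hXC m _ h1 _ h2 E1
    · -- w2 ∈ F
      have hi' : i = js := by
        by_contra hni
        exact N02 ((hFB i hni _ h2 _ h0).symm)
      have h0' : w 0 ∈ B js := by rw [← hi']; exact h0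
      rcases h1 with h1 | h1 | h1
      · -- w1 ∈ A
        rcases mem6 (w 3) with h3 | ⟨p, h3⟩ | ⟨p, h3⟩ | h3 | h3 | h3
        · exact N13 (cliqA h1 h3 NE13)
        · exact N13 (hAB p _ h1 _ h3)
        · -- w3 ∈ C p
          rcases mem6 (w 4) with h4 | ⟨q, h4⟩ | ⟨q, h4⟩ | h4 | h4 | h4
          · exact hAC p _ h4 _ h3 E3.symm
          · exact N14 (hAB q _ h1 _ h4)
          · by_cases hq : q = js
            · exact N04 (hBjCj _ h0' _ (by rw [← hq]; exact h4))
            · exact N24 (hFC q hq _ h2 _ h4)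
          · exact N24 (cliqF h2 h4 NE24)
          · exact hXC p _ h4 _ h3 E3.symm
          · exact N24 (hFY _ h2 _ h4)
        · exact N13 (hFA _ h3 _ h1).symm
        · exact N13 (hXA _ h3 _ h1).symm
        · -- w3 ∈ Y
          rcases mem6 (w 4) with h4 | ⟨q, h4⟩ | ⟨q, h4⟩ | h4 | h4 | h4
          · exact hYA _ h3 _ h4 E3
          · exact N14 (hAB q _ h1 _ h4)
          · by_cases hq : q = js
            · exact N04 (hBjCj _ h0' _ (by rw [← hq]; exact h4))
            · exact N24 (hFC q hq _ h2 _ h4)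
          · exact N24 (cliqF h2 h4 NE24)
          · exact hXY _ h4 _ h3 E3.symm
          · exact N24 (hFY _ h2 _ h4)
      · exact hFBj _ h1 _ h0' E0.symm
      · -- w1 ∈ X
        rcases mem6 (w 3) with h3 | ⟨p, h3⟩ | ⟨p, h3⟩ | h3 | h3 | h3
        · exact N13 (hXA _ h1 _ h3)
        · -- w3 ∈ B p with p ≠ js
          have hp : p ≠ js := fun hh => hFBj _ h2 _ (by rw [← hh]; exact h3) E2
          rcases mem6 (w 4) with h4 | ⟨q, h4⟩ | ⟨q, h4⟩ | h4 | h4 | h4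
          · exact N14 (hXA _ h1 _ h4)
          · have hq : p = q := BBs h3 h4 E3
            exact N24 (hFB q (fun hh => hp (hq.trans hh)) _ h2 _ h4)
          · have hq : p = q := BCs h3 h4 E3
            exact N24 (hFC q (fun hh => hp (hq.trans hh)) _ h2 _ h4)
          · exact N24 (cliqF h2 h4 NE24)
          · exact N14 (cliqX h1 h4 NE14)
          · exact hYB p _ h4 _ h3 E3.symm
        · -- w3 ∈ C p
          rcases mem6 (w 4) with h4 | ⟨q, h4⟩ | ⟨q, h4⟩ | h4 | h4 | h4
          · exact hAC p _ h4 _ h3 E3.symm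
          · have hq : q = p := BCs h4 h3 E3.symm
            have hp : p ≠ js := fun hh => hFCj _ h2 _ (by rw [← hh]; exact h3) E2
            exact N24 (hFB q (fun hh => hp (hq.symm.trans hh)) _ h2 _ h4)
          · by_cases hq : q = js
            · exact N04 (hBjCj _ h0' _ (by rw [← hq]; exact h4))
            · exact N24 (hFC q hq _ h2 _ h4)
          · exact N24 (cliqF h2 h4 NE24)
          · exact hXC p _ h4 _ h3 E3.symm
          · exact N24 (hFY _ h2 _ h4)
        · exact N13 (hFX _ h3 _ h1).symm
        · exact N13 (cliqX h1 h3 NE13)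
        · -- w3 ∈ Y
          rcases mem6 (w 4) with h4 | ⟨q, h4⟩ | ⟨q, h4⟩ | h4 | h4 | h4
          · exact hYA _ h3 _ h4 E3
          · exact hYB q _ h3 _ h4 E3
          · by_cases hq : q = js
            · exact N04 (hBjCj _ h0' _ (by rw [← hq]; exact h4))
            · exact N24 (hFC q hq _ h2 _ h4)
          · exact N24 (cliqF h2 h4 NE24)
          · exact hXY _ h4 _ h3 E3.symm
          · exact N24 (hFY _ h2 _ h4)
    · -- w2 ∈ X
      have hi' : i ≠ js := fun hh => N02 ((hXBj _ h2 _ (by rw [← hh]; exact h0)).symm)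
      rcases h1 with h1 | h1 | h1
      · -- w1 ∈ A
        rcases mem6 (w 3) with h3 | ⟨p, h3⟩ | ⟨p, h3⟩ | h3 | h3 | h3
        · exact N13 (cliqA h1 h3 NE13)
        · exact N13 (hAB p _ h1 _ h3)
        · exact hXC p _ h2 _ h3 E2
        · exact N13 (hFA _ h3 _ h1).symm
        · exact N13 (hXA _ h3 _ h1).symm
        · exact hXY _ h2 _ h3 E2
      · -- w1 ∈ F
        rcases mem6 (w 3) with h3 | ⟨p, h3⟩ | ⟨p, h3⟩ | h3 | h3 | h3
        · exact N13 (hFA _ h1 _ h3)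
        · -- w3 ∈ B p with p = js
          have hp : p = js := by
            by_contra hnp
            exact hXB p hnp _ h2 _ h3 E2
          have h3' : w 3 ∈ B js := by rw [← hp]; exact h3
          rcases mem6 (w 4) with h4 | ⟨q, h4⟩ | ⟨q, h4⟩ | h4 | h4 | h4
          · exact N14 (hFA _ h1 _ h4)
          · have hq : js = q := BBs h3' h4 E3
            exact N24 (hXBj _ h2 _ (by rw [← hq] at h4; exact h4))
          · -- w4 ∈ C q with q = js
            have hq : js = q := BCs h3' h4 E3
            have h4' : w 4 ∈ C js := by rw [← hq] at h4; exact h4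
            rcases mem6 (w 5) with h5 | ⟨r, h5⟩ | ⟨r, h5⟩ | h5 | h5 | h5
            · exact hAC js _ h5 _ h4' E4.symm
            · have hr : r = js := BCs h5 h4' E4.symm
              exact N35 (cliqB js h3' (by rw [← hr]; exact h5) NE35)
            · by_cases hr : r = js
              · exact N35 (hBjCj _ h3' _ (by rw [← hr]; exact h5))
              · exact N15 (hFC r hr _ h1 _ h5)
            · exact hFCj _ h5 _ h4' E4.symm
            · exact hXC js _ h5 _ h4' E4.symm
            · exact N15 (hFY _ h1 _ h5)
          · exact N14 (cliqF h1 h4 NE14)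
          · exact N24 (cliqX h2 h4 NE24)
          · exact hYB js _ h4 _ h3' E3.symm
        · exact hXC p _ h2 _ h3 E2
        · exact N13 (cliqF h1 h3 NE13)
        · exact N13 (hFX _ h1 _ h3)
        · exact N13 (hFY _ h1 _ h3)
      · exact hXB i hi' _ h1 _ h0 E0.symm
    · -- w2 ∈ Y
      rcases h1 with h1 | h1 | h1
      · exact hYA _ h2 _ h1 E1.symm
      · -- w1 ∈ F
        have cont45 : w 3 ∈ C js → False := by
          intro h3
          rcases mem6 (w 4) with h4 | ⟨q, h4⟩ | ⟨q, h4⟩ | h4 | h4 | h4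
          · exact hAC js _ h4 _ h3 E3.symm
          · have hq : q = js := BCs h4 h3 E3.symm
            have h4' : w 4 ∈ B js := by rw [← hq]; exact h4
            rcases mem6 (w 5) with h5 | ⟨r, h5⟩ | ⟨r, h5⟩ | h5 | h5 | h5
            · exact N15 (hFA _ h1 _ h5)
            · have hr : js = r := BBs h4' h5 E4
              exact N35 (hBjCj _ (by rw [← hr] at h5; exact h5) _ h3).symm
            · have hr : js = r := BCs h4' h5 E4
              exact N35 (cliqC js h3 (by rw [← hr] at h5; exact h5) NE35)
            · exact N15 (cliqF h1 h5 NE15)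
            · exact N15 (hFX _ h1 _ h5)
            · exact hYB js _ h5 _ h4' E4.symm
          · exact N24 (hYC q _ h2 _ h4)
          · exact N14 (cliqF h1 h4 NE14)
          · exact hXC js _ h4 _ h3 E3.symm
          · exact N24 (cliqY h2 h4 NE24)
        rcases mem6 (w 3) with h3 | ⟨p, h3⟩ | ⟨p, h3⟩ | h3 | h3 | h3
        · exact N13 (hFA _ h1 _ h3)
        · exact hYB p _ h2 _ h3 E2
        · by_cases hpj : p = js
          · exact cont45 (by rw [← hpj]; exact h3)
          · exact N13 (hFC p hpj _ h1 _ h3)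
        · exact N13 (cliqF h1 h3 NE13)
        · exact N13 (hFX _ h1 _ h3)
        · exact N13 (hFY _ h1 _ h3)
      · exact hXY _ h1 _ h2 E1

private lemma noBcase {W : Type} {t n : ℕ} {Q : SimpleGraph W} {A : Set W}
    {B C : Fin t → Set W} {F X Y : Set W}
    (hM : IsMansionPartition Q A B C F X Y) (hn : 4 ≤ n) (hn5 : n ≠ 5)
    (f : cycleG n ↪g Q) (hnoB : ∀ (k : ZMod n) (p : Fin t), f k ∉ B p) : False := by
  obtain ⟨⟨dAB, dAC, dBB, dCC, dBC, cliqA, cliqB, cliqC, hAne, hBne, hCne, hAB, hAC,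
    hBB, hCC, hBC, hchain, hnb, hnbf⟩, dAF, dAX, dAY, dBF, dBX, dBY, dCF, dCX, dCY,
    dFX, dFY, dXY, hUniv, cliqF, cliqX, cliqY, hFne,
    ⟨js, hFA, hFB, hFC, hFBj, hFCj, hBjCj, hXA, hXBj, hXB, hXC⟩,
    hFX, hFY, hXY, hYC, hYA, hYB⟩ := hM
  have mem6 : ∀ v : W, v ∈ A ∨ (∃ p, v ∈ B p) ∨ (∃ p, v ∈ C p) ∨ v ∈ F ∨ v ∈ X ∨ v ∈ Y := by
    intro v
    have hv : v ∈ A ∪ (⋃ i, B i) ∪ (⋃ i, C i) ∪ F ∪ X ∪ Y := by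
      rw [hUniv]; exact Set.mem_univ v
    simp only [Set.mem_union, Set.mem_iUnion] at hv
    rcases hv with ((((h | ⟨p, h⟩) | ⟨p, h⟩) | h) | h) | h
    · exact Or.inl h
    · exact Or.inr (Or.inl ⟨p, h⟩)
    · exact Or.inr (Or.inr (Or.inl ⟨p, h⟩))
    · exact Or.inr (Or.inr (Or.inr (Or.inl h)))
    · exact Or.inr (Or.inr (Or.inr (Or.inr (Or.inl h))))
    · exact Or.inr (Or.inr (Or.inr (Or.inr (Or.inr h))))
  set w : ℕ → W := fun a => f ((0 : ZMod n) + (a : ZMod n)) with hwdef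
  have wadj : ∀ a : ℕ, Q.Adj (w a) (w (a + 1)) := by
    intro a
    simp only [hwdef]
    have hc : ((a + 1 : ℕ) : ZMod n) = (a : ZMod n) + 1 := by push_cast; ring
    rw [hc, ← add_assoc]
    exact f.map_adj_iff.mpr (cyc_adj_succ (by omega) _)
  have wnadj : ∀ a b : ℕ, a + 2 ≤ b → b + 2 ≤ a + n → ¬ Q.Adj (w a) (w b) :=
    fun a b h1 h2 h => cyc_nonadj a b h1 h2 0 (f.map_adj_iff.mp h)
  have wne : ∀ a b : ℕ, a < b → b < a + n → w a ≠ w b :=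
    fun a b h1 h2 h => zmod_add_ne a b h1 h2 0 (f.injective h)
  have E0 : Q.Adj (w 0) (w 1) := wadj 0
  have E1 : Q.Adj (w 1) (w 2) := wadj 1
  have E2 : Q.Adj (w 2) (w 3) := wadj 2
  have class2 : ∀ a : ℕ, (w a ∈ A ∨ w a ∈ F ∨ w a ∈ X) ∨ (w a ∈ Y ∨ ∃ q, w a ∈ C q) := by
    intro a
    rcases mem6 (w a) with h | ⟨p, h⟩ | ⟨q, h⟩ | h | h | h
    · exact Or.inl (Or.inl h)
    · exact absurd h (hnoB _ p)
    · exact Or.inr (Or.inr ⟨q, h⟩)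
    · exact Or.inl (Or.inr (Or.inl h))
    · exact Or.inl (Or.inr (Or.inr h))
    · exact Or.inr (Or.inl h)
  have TT : ∀ u v : W, u ≠ v → (u ∈ A ∨ u ∈ F ∨ u ∈ X) → (v ∈ A ∨ v ∈ F ∨ v ∈ X) →
      Q.Adj u v := by
    rintro u v hne (hu | hu | hu) (hv | hv | hv)
    · exact cliqA hu hv hne
    · exact (hFA _ hv _ hu).symm
    · exact (hXA _ hv _ hu).symm
    · exact hFA _ hu _ hv
    · exact cliqF hu hv hne
    · exact hFX _ hu _ hv
    · exact hXA _ hu _ hv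
    · exact (hFX _ hv _ hu).symm
    · exact cliqX hu hv hne
  have DD : ∀ u v : W, u ≠ v → (u ∈ Y ∨ ∃ q, u ∈ C q) → (v ∈ Y ∨ ∃ q, v ∈ C q) →
      Q.Adj u v := by
    rintro u v hne (hu | ⟨p, hu⟩) (hv | ⟨q, hv⟩)
    · exact cliqY hu hv hne
    · exact hYC q _ hu _ hv
    · exact (hYC p _ hv _ hu).symm
    · by_cases hpq : p = q
      · exact cliqC p hu (by rw [hpq]; exact hv) hne
      · exact hCC p q hpq _ hu _ hv
  have killT : ∀ a b : ℕ, a + 2 ≤ b → b + 2 ≤ a + n →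
      (w a ∈ A ∨ w a ∈ F ∨ w a ∈ X) → (w b ∈ A ∨ w b ∈ F ∨ w b ∈ X) → False :=
    fun a b hab1 hab2 ha hb =>
      wnadj a b hab1 hab2 (TT _ _ (wne a b (by omega) (by omega)) ha hb)
  have killD : ∀ a b : ℕ, a + 2 ≤ b → b + 2 ≤ a + n →
      (w a ∈ Y ∨ ∃ q, w a ∈ C q) → (w b ∈ Y ∨ ∃ q, w b ∈ C q) → False :=
    fun a b hab1 hab2 ha hb =>
      wnadj a b hab1 hab2 (DD _ _ (wne a b (by omega) (by omega)) ha hb)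
  have TDedge : ∀ u v : W, (u ∈ A ∨ u ∈ F ∨ u ∈ X) → (v ∈ Y ∨ ∃ q, v ∈ C q) → Q.Adj u v →
      u ∈ F ∧ (v ∈ Y ∨ ∃ q, q ≠ js ∧ v ∈ C q) := by
    rintro u v (hu | hu | hu) (hv | ⟨q, hv⟩) h
    · exact absurd h.symm (hYA _ hv _ hu)
    · exact absurd h (hAC q _ hu _ hv)
    · exact ⟨hu, Or.inl hv⟩
    · exact ⟨hu, Or.inr ⟨q, fun hh => hFCj _ hu _ (by rw [← hh]; exact hv) h, hv⟩⟩
    · exact absurd h (hXY _ hu _ hv)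
    · exact absurd h (hXC q _ hu _ hv)
  have FDadj : ∀ u v : W, u ∈ F → (v ∈ Y ∨ ∃ q, q ≠ js ∧ v ∈ C q) → Q.Adj u v := by
    rintro u v hu (hv | ⟨q, hq, hv⟩)
    · exact hFY _ hu _ hv
    · exact hFC q hq _ hu _ hv
  rcases (show n = 4 ∨ 6 ≤ n by omega) with hn4 | hn6
  · subst hn4
    have w30 : Q.Adj (w 3) (w 0) := by
      simp only [hwdef]
      apply f.map_adj_iff.mpr
      refine (SimpleGraph.fromRel_adj _ _ _).mpr ⟨?_, Or.inl ?_⟩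
      · intro hh
        exact zmod_add_ne 0 3 (by omega) (by omega) 0 hh.symm
      · rw [add_assoc]
        exact congrArg (fun z => (0 : ZMod 4) + z) (by decide)
    rcases class2 0 with h0 | h0 <;> rcases class2 1 with h1 | h1 <;>
      rcases class2 2 with h2 | h2 <;> rcases class2 3 with h3 | h3
    · exact killT 0 2 (by omega) (by omega) h0 h2
    · exact killT 0 2 (by omega) (by omega) h0 h2
    · exact killT 1 3 (by omega) (by omega) h1 h3
    · obtain ⟨h1F, h2d⟩ := TDedge _ _ h1 h2 E1
      obtain ⟨h0F, -⟩ := TDedge _ _ h0 h3 w30.symm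
      exact wnadj 0 2 (by omega) (by omega) (FDadj _ _ h0F h2d)
    · exact killT 0 2 (by omega) (by omega) h0 h2
    · exact killT 0 2 (by omega) (by omega) h0 h2
    · obtain ⟨h0F, h1d⟩ := TDedge _ _ h0 h1 E0
      obtain ⟨h3F, -⟩ := TDedge _ _ h3 h2 E2.symm
      exact wnadj 1 3 (by omega) (by omega) (FDadj _ _ h3F h1d).symm
    · exact killD 1 3 (by omega) (by omega) h1 h3
    · exact killT 1 3 (by omega) (by omega) h1 h3
    · obtain ⟨h1F, h0d⟩ := TDedge _ _ h1 h0 E0.symm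
      obtain ⟨h2F, h3d⟩ := TDedge _ _ h2 h3 E2
      exact wnadj 1 3 (by omega) (by omega) (FDadj _ _ h1F h3d)
    · exact killT 1 3 (by omega) (by omega) h1 h3
    · exact killD 0 2 (by omega) (by omega) h0 h2
    · obtain ⟨h2F, h1d⟩ := TDedge _ _ h2 h1 E1.symm
      obtain ⟨h3F, h0d⟩ := TDedge _ _ h3 h0 w30
      exact wnadj 1 3 (by omega) (by omega) (FDadj _ _ h3F h1d).symm
    · exact killD 1 3 (by omega) (by omega) h1 h3
    · exact killD 0 2 (by omega) (by omega) h0 h2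
    · exact killD 0 2 (by omega) (by omega) h0 h2
  · rcases class2 0 with h0 | h0 <;> rcases class2 2 with h2 | h2 <;>
      rcases class2 4 with h4 | h4
    · exact killT 0 2 (by omega) (by omega) h0 h2
    · exact killT 0 2 (by omega) (by omega) h0 h2
    · exact killT 0 4 (by omega) (by omega) h0 h4
    · exact killD 2 4 (by omega) (by omega) h2 h4
    · exact killT 2 4 (by omega) (by omega) h2 h4
    · exact killD 0 4 (by omega) (by omega) h0 h4
    · exact killD 0 2 (by omega) (by omega) h0 h2
    · exact killD 0 2 (by omega) (by omega) h0 h2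

private lemma anchorcase {W : Type} {t n : ℕ} {Q : SimpleGraph W} {A : Set W}
    {B C : Fin t → Set W} {F X Y : Set W}
    (hM : IsMansionPartition Q A B C F X Y) (hn : 4 ≤ n) (hn5 : n ≠ 5)
    (f : cycleG n ↪g Q) (k₀ : ZMod n) (i₀ : Fin t) (hk0 : f k₀ ∈ B i₀) : False := by
  have hM' := hM
  obtain ⟨⟨dAB, dAC, dBB, dCC, dBC, cliqA, cliqB, cliqC, hAne, hBne, hCne, hAB, hAC,
    hBB, hCC, hBC, hchain, hnb, hnbf⟩, dAF, dAX, dAY, dBF, dBX, dBY, dCF, dCX, dCY,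
    dFX, dFY, dXY, hUniv, cliqF, cliqX, cliqY, hFne,
    ⟨js, hFA, hFB, hFC, hFBj, hFCj, hBjCj, hXA, hXBj, hXB, hXC⟩,
    hFX, hFY, hXY, hYC, hYA, hYB⟩ := hM'
  have mem6 : ∀ v : W, v ∈ A ∨ (∃ p, v ∈ B p) ∨ (∃ p, v ∈ C p) ∨ v ∈ F ∨ v ∈ X ∨ v ∈ Y := by
    intro v
    have hv : v ∈ A ∪ (⋃ i, B i) ∪ (⋃ i, C i) ∪ F ∪ X ∪ Y := by
      rw [hUniv]; exact Set.mem_univ v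
    simp only [Set.mem_union, Set.mem_iUnion] at hv
    rcases hv with ((((h | ⟨p, h⟩) | ⟨p, h⟩) | h) | h) | h
    · exact Or.inl h
    · exact Or.inr (Or.inl ⟨p, h⟩)
    · exact Or.inr (Or.inr (Or.inl ⟨p, h⟩))
    · exact Or.inr (Or.inr (Or.inr (Or.inl h)))
    · exact Or.inr (Or.inr (Or.inr (Or.inr (Or.inl h))))
    · exact Or.inr (Or.inr (Or.inr (Or.inr (Or.inr h))))
  set K : ZMod n := k₀ - 2 with hK
  set w : ℕ → W := fun a => f (K + (a : ZMod n)) with hwdef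
  have wadj : ∀ a : ℕ, Q.Adj (w a) (w (a + 1)) := by
    intro a
    simp only [hwdef]
    have hc : ((a + 1 : ℕ) : ZMod n) = (a : ZMod n) + 1 := by push_cast; ring
    rw [hc, ← add_assoc]
    exact f.map_adj_iff.mpr (cyc_adj_succ (by omega) _)
  have wnadj : ∀ a b : ℕ, a + 2 ≤ b → b + 2 ≤ a + n → ¬ Q.Adj (w a) (w b) :=
    fun a b h1 h2 h => cyc_nonadj a b h1 h2 K (f.map_adj_iff.mp h)
  have wne : ∀ a b : ℕ, a < b → b < a + n → w a ≠ w b :=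
    fun a b h1 h2 h => zmod_add_ne a b h1 h2 K (f.injective h)
  have BBs : ∀ {u v : W} {p q : Fin t}, u ∈ B p → v ∈ B q → Q.Adj u v → p = q := by
    intro u v p q hu hv h
    by_contra hne
    exact hBB p q hne u hu v hv h
  have BCs : ∀ {u v : W} {p q : Fin t}, u ∈ B p → v ∈ C q → Q.Adj u v → p = q := by
    intro u v p q hu hv h
    by_contra hne
    exact hBC p q hne u hu v hv h
  have E0 : Q.Adj (w 0) (w 1) := wadj 0
  have E1 : Q.Adj (w 1) (w 2) := wadj 1
  have E2 : Q.Adj (w 2) (w 3) := wadj 2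
  have E3 : Q.Adj (w 3) (w 4) := wadj 3
  have N02 : ¬ Q.Adj (w 0) (w 2) := wnadj 0 2 (by omega) (by omega)
  have N13 : ¬ Q.Adj (w 1) (w 3) := wnadj 1 3 (by omega) (by omega)
  have N24 : ¬ Q.Adj (w 2) (w 4) := wnadj 2 4 (by omega) (by omega)
  have NE13 : w 1 ≠ w 3 := wne 1 3 (by omega) (by omega)
  have hw2 : w 2 ∈ B i₀ := by
    simp only [hwdef]
    have hc : K + ((2 : ℕ) : ZMod n) = k₀ := by rw [hK]; push_cast; ring
    rw [hc]; exact hk0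
  have no3B : ∀ a : ℕ, (∃ p, w a ∈ B p) → (∃ p, w (a + 1) ∈ B p) →
      (∃ p, w (a + 2) ∈ B p) → False := by
    rintro a ⟨p, hp⟩ ⟨q, hq⟩ ⟨r, hr⟩
    have e1 : p = q := BBs hp hq (wadj a)
    have e2 : q = r := BBs hq hr (wadj (a + 1))
    refine wnadj a (a + 2) (by omega) (by omega)
      (cliqB p hp ?_ (wne a (a + 2) (by omega) (by omega)))
    rw [e1, e2]; exact hr
  have BDmem : ∀ {u v : W} {p : Fin t}, u ∈ B p → (v ∈ Y ∨ ∃ q, v ∈ C q) → Q.Adj u v →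
      v ∈ C p := by
    rintro u v p hu (hv | ⟨q, hv⟩) h
    · exact absurd h.symm (hYB p _ hv _ hu)
    · rwa [← BCs hu hv h] at hv
  have cls : ∀ v : W, (∃ p, v ∈ B p) ∨ ((v ∈ A ∨ v ∈ F ∨ v ∈ X) ∨ (v ∈ Y ∨ ∃ q, v ∈ C q)) := by
    intro v
    rcases mem6 v with h | h | ⟨q, h⟩ | h | h | h
    · exact Or.inr (Or.inl (Or.inl h))
    · exact Or.inl h
    · exact Or.inr (Or.inr (Or.inr ⟨q, h⟩))
    · exact Or.inr (Or.inl (Or.inr (Or.inl h)))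
    · exact Or.inr (Or.inl (Or.inr (Or.inr h)))
    · exact Or.inr (Or.inr (Or.inl h))
  have fwd : ∀ (e : ℕ) (p : Fin t), w e ∈ B p →
      (w (e + 1) ∈ A ∨ w (e + 1) ∈ F ∨ w (e + 1) ∈ X) → False := by
    intro e p hbe hte
    refine walkcore hM hn hn5 f (K + (e : ZMod n)) p hbe ?_
    have hc : K + ((e + 1 : ℕ) : ZMod n) = (K + (e : ZMod n)) + 1 := by push_cast; ring
    rw [← hc]
    exact hte
  have bwd : ∀ (s : ℕ) (p : Fin t), 1 ≤ s → w s ∈ B p →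
      (w (s - 1) ∈ A ∨ w (s - 1) ∈ F ∨ w (s - 1) ∈ X) → False := by
    intro s p hs hbs hts
    have hembap : ∀ x : ZMod n, (f.comp (mirrorIso n).toEmbedding) x = f (-x) := fun x => rfl
    refine walkcore hM hn hn5 (f.comp (mirrorIso n).toEmbedding) (-(K + (s : ZMod n))) p ?_ ?_
    · rw [hembap, neg_neg]; exact hbs
    · rw [hembap]
      have hc : -(-(K + (s : ZMod n)) + 1) = K + ((s - 1 : ℕ) : ZMod n) := by
        rw [Nat.cast_sub hs, Nat.cast_one]; ring
      rw [hc]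
      exact hts
  by_cases h3B : ∃ p, w 3 ∈ B p
  · obtain ⟨p3, hp3⟩ := h3B
    have hp3' : w 3 ∈ B i₀ := by rw [BBs hw2 hp3 E2]; exact hp3
    have h4nB : ¬ ∃ p, w 4 ∈ B p := fun h => no3B 2 ⟨i₀, hw2⟩ ⟨p3, hp3⟩ h
    rcases cls (w 4) with h4B | h4T | h4D
    · exact h4nB h4B
    · exact fwd 3 i₀ hp3' h4T
    · have h1nB : ¬ ∃ p, w 1 ∈ B p := fun h => no3B 1 h ⟨i₀, hw2⟩ ⟨p3, hp3⟩
      rcases cls (w 1) with h1B | h1T | h1D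
      · exact h1nB h1B
      · exact bwd 2 i₀ (by omega) hw2 h1T
      · -- containment contradiction: arc (2,3), outer (1,4)
        have hc1 : w 1 ∈ C i₀ := BDmem hw2 h1D E1.symm
        have hc4 : w 4 ∈ C i₀ := BDmem hp3' h4D E3
        rcases hchain i₀ (w 2) hw2 (w 3) hp3' with hsub | hsub
        · have hmem := hsub ⟨(Q.mem_neighborSet _ _).mpr E1.symm, hc1⟩
          exact N13 ((Q.mem_neighborSet _ _).mp hmem.1).symm
        · have hmem := hsub ⟨(Q.mem_neighborSet _ _).mpr E3, hc4⟩
          exact N24 ((Q.mem_neighborSet _ _).mp hmem.1)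
  · rcases cls (w 3) with h3B' | h3T | h3D
    · exact h3B h3B'
    · exact fwd 2 i₀ hw2 h3T
    · by_cases h1B : ∃ p, w 1 ∈ B p
      · obtain ⟨p1, hp1⟩ := h1B
        have hp1' : w 1 ∈ B i₀ := by rw [← BBs hp1 hw2 E1]; exact hp1
        have h0nB : ¬ ∃ p, w 0 ∈ B p := fun h => no3B 0 h ⟨p1, hp1⟩ ⟨i₀, hw2⟩
        rcases cls (w 0) with h0B | h0T | h0D
        · exact h0nB h0B
        · exact bwd 1 i₀ (by omega) hp1' h0T
        · -- containment contradiction: arc (1,2), outer (0,3)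
          have hc0 : w 0 ∈ C i₀ := BDmem hp1' h0D E0.symm
          have hc3 : w 3 ∈ C i₀ := BDmem hw2 h3D E2
          rcases hchain i₀ (w 1) hp1' (w 2) hw2 with hsub | hsub
          · have hmem := hsub ⟨(Q.mem_neighborSet _ _).mpr E0.symm, hc0⟩
            exact N02 ((Q.mem_neighborSet _ _).mp hmem.1).symm
          · have hmem := hsub ⟨(Q.mem_neighborSet _ _).mpr E2, hc3⟩
            exact N13 ((Q.mem_neighborSet _ _).mp hmem.1)
      · rcases cls (w 1) with h1B' | h1T | h1D
        · exact h1B h1B'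
        · exact bwd 2 i₀ (by omega) hw2 h1T
        · have hc1 : w 1 ∈ C i₀ := BDmem hw2 h1D E1.symm
          have hc3 : w 3 ∈ C i₀ := BDmem hw2 h3D E2
          exact N13 (cliqC i₀ hc1 hc3 NE13)

private lemma mansion_hole {W : Type} {t n : ℕ} {Q : SimpleGraph W} {A : Set W}
    {B C : Fin t → Set W} {F X Y : Set W}
    (hM : IsMansionPartition Q A B C F X Y) (hn : 4 ≤ n)
    (f : cycleG n ↪g Q) : n = 5 := by
  by_contra hn5
  by_cases hB : ∃ (k : ZMod n) (p : Fin t), f k ∈ B p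
  · obtain ⟨k₀, p₀, hk⟩ := hB
    exact anchorcase hM hn hn5 f k₀ p₀ hk
  · push_neg at hB
    exact noBcase hM hn hn5 f hB

theorem statement_18 {W : Type} [Fintype W] (t : ℕ) (ht : 3 ≤ t)
    (Q : SimpleGraph W) (hQ : IsTMansion t Q) :
    (∀ n : ℕ, 4 ≤ n → Nonempty (cycleG n ↪g Q) → n = 5) ∧
    IndFree Q (cycleG 4) ∧ IndFree Q (cycleG 6) ∧ IndFree Q (cycleG 7) := by
  obtain ⟨A, B, C, F, X, Y, hM⟩ := hQ
  have key : ∀ n : ℕ, 4 ≤ n → Nonempty (cycleG n ↪g Q) → n = 5 := by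
    rintro n hn ⟨f⟩
    exact mansion_hole hM hn f
  exact ⟨key,
    ⟨fun f => absurd (key 4 (by norm_num) ⟨f⟩) (by norm_num)⟩,
    ⟨fun f => absurd (key 6 (by norm_num) ⟨f⟩) (by norm_num)⟩,
    ⟨fun f => absurd (key 7 (by norm_num) ⟨f⟩) (by norm_num)⟩⟩

end Paper
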